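/- Let G be a finite tree (a connected acyclic simple graph) and let i ≠ j be two vertices of G each having degree at least 2 (non-leaf nodes). Then the transposition of i and j (the permutation swapping i and j and fixing all other vertices) is not a graph automorphism of G; i.e. permuting two non-leaf vertices without simultaneously permuting their sub-trees never preserves the edge set. -/

import Mathlib

/-- In a finite tree, the transposition of two distinct non-leaf vertices `i` and `j`
(each of degree at least 2) is never a graph automorphism: permuting two non-leaf
vertices without simultaneously permuting their sub-trees does not preserve the edges. -/
theorem nonleaf_swap_not_automorphism {V : Type*} [Fintype V] [DecidableEq V]
    (G : SimpleGraph V) [DecidableRel G.Adj] (hG : G.IsTree)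
    (i j : V) (hij : i ≠ j) (hi : 2 ≤ G.degree i) (hj : 2 ≤ G.degree j) :
    ¬ ∀ u v : V, G.Adj (Equiv.swap i j u) (Equiv.swap i j v) ↔ G.Adj u v := by
  intro h
  have uniq := hG.existsUnique_path i j
  obtain ⟨p0, hp0, huniq⟩ := uniq
  -- any neighbor x of i with x ≠ j is also a neighbor of j
  have key : ∀ x, G.Adj i x → x ≠ j → G.Adj j x := by
    intro x hix hxj
    have hxi : x ≠ i := fun e => G.loopless.irrefl i (e ▸ hix)
    have := (h i x).mpr hix
    rwa [Equiv.swap_apply_left, Equiv.swap_apply_of_ne_of_ne hxi hxj] at this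
  by_cases hA : G.Adj i j
  · -- get a neighbor of i other than j
    have hcard : 1 < (G.neighborFinset i).card := by
      rw [G.card_neighborFinset_eq_degree]; omega
    obtain ⟨x, hx, hxj⟩ := Finset.exists_mem_ne hcard j
    rw [SimpleGraph.mem_neighborFinset] at hx
    have hjx := key x hx hxj
    have hxi : x ≠ i := fun e => G.loopless.irrefl i (e ▸ hx)
    have hp1 : (SimpleGraph.Walk.cons hA SimpleGraph.Walk.nil : G.Walk i j).IsPath := by
      simp [SimpleGraph.Walk.isPath_def, hij]
    have hp2 : (SimpleGraph.Walk.cons hx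
        (SimpleGraph.Walk.cons hjx.symm SimpleGraph.Walk.nil) : G.Walk i j).IsPath := by
      simp [SimpleGraph.Walk.isPath_def, hij, hxi.symm, hxj]
    have e := (huniq _ hp1).trans (huniq _ hp2).symm
    simpa using congrArg SimpleGraph.Walk.length e
  · -- get two distinct neighbors of i, both ≠ j
    have hcard : 1 < (G.neighborFinset i).card := by
      rw [G.card_neighborFinset_eq_degree]; omega
    obtain ⟨x, hx, y, hy, hxy⟩ := Finset.one_lt_card.mp hcard
    rw [SimpleGraph.mem_neighborFinset] at hx hy
    have hxj : x ≠ j := fun e => hA (e ▸ hx)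
    have hyj : y ≠ j := fun e => hA (e ▸ hy)
    have hxi : x ≠ i := fun e => G.loopless.irrefl i (e ▸ hx)
    have hyi : y ≠ i := fun e => G.loopless.irrefl i (e ▸ hy)
    have hjx := key x hx hxj
    have hjy := key y hy hyj
    have hp1 : (SimpleGraph.Walk.cons hx
        (SimpleGraph.Walk.cons hjx.symm SimpleGraph.Walk.nil) : G.Walk i j).IsPath := by
      simp [SimpleGraph.Walk.isPath_def, hij, hxi.symm, hxj]
    have hp2 : (SimpleGraph.Walk.cons hy
        (SimpleGraph.Walk.cons hjy.symm SimpleGraph.Walk.nil) : G.Walk i j).IsPath := by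
      simp [SimpleGraph.Walk.isPath_def, hij, hyi.symm, hyj]
    have e := (huniq _ hp1).trans (huniq _ hp2).symm
    have := congrArg SimpleGraph.Walk.support e
    simp at this
    exact hxy this
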